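/- Let A ∈ ℂ^{n×n} with ρ(A) < 1. Suppose x, w ∈ l₂ and y ∈ l₂ with y_k = A^k y₀. Then there is a constant C depending only on A such that ‖Λ(x+y, w) − Λ(x, w)‖_F ≤ C max{(‖x‖_∞ + ‖w‖_∞)‖y₀‖₂, ‖y₀‖₂²}, where Λ(u,v) = ∑_k [u_k; v_k][u_k; v_k]*. -/

import Mathlib

set_option maxHeartbeats 1000000

open Matrix

/-- Outer product `v v*` of a vector. -/
noncomputable def outer {ι : Type*} [Fintype ι] (v : ι → ℂ) : Matrix ι ι ℂ :=
  Matrix.of fun i j => v i * star (v j)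

/-- Frobenius norm of a complex matrix. -/
noncomputable def frob {ι κ : Type*} [Fintype ι] [Fintype κ] (M : Matrix ι κ ℂ) : ℝ :=
  Real.sqrt (∑ i, ∑ j, ‖M i j‖ ^ 2)

/-- Gramian `Λ(x, w) = ∑ₖ [xₖ; wₖ][xₖ; wₖ]ᴴ` of a stacked signal pair. -/
noncomputable def gram {n m : ℕ} (x : ℕ → Fin n → ℂ) (w : ℕ → Fin m → ℂ) :
    Matrix (Fin n ⊕ Fin m) (Fin n ⊕ Fin m) ℂ :=
  ∑' k, outer (Sum.elim (x k) (w k))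

section Aux

open Filter

attribute [local instance] Matrix.linftyOpNormedRing Matrix.linftyOpNormedAlgebra

/-- Geometric-type summable bound on the powers of a matrix with spectral radius `< 1`. -/
lemma exists_geom_bound {n : ℕ} (A : Matrix (Fin n) (Fin n) ℂ)
    (hA : spectralRadius ℂ A < 1) :
    ∃ c : ℕ → ℝ, (∀ k, 0 ≤ c k) ∧ Summable c ∧ Summable (fun k => c k ^ 2) ∧
      ∀ (k : ℕ) (i : Fin n), (∑ j, ‖(A ^ k) i j‖) ≤ c k := by
  have hsum : Summable (fun k : ℕ => ‖A ^ k‖) := by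
    obtain ⟨r, hr1, hr2⟩ := exists_between hA
    have htend := spectrum.pow_nnnorm_pow_one_div_tendsto_nhds_spectralRadius A
    have hev : ∀ᶠ k : ℕ in atTop, (‖A ^ k‖₊ : ENNReal) ^ (1 / k : ℝ) < r :=
      htend.eventually_lt_const hr1
    obtain ⟨N, hN⟩ := (hev.and (eventually_ge_atTop 1)).exists_forall_of_atTop
    have hrtop : r ≠ ⊤ := (hr2.trans_le le_top).ne
    have hrr : r.toReal < 1 := by
      have := (ENNReal.toReal_lt_toReal hrtop (by simp : (1:ENNReal) ≠ ⊤)).mpr hr2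
      simpa using this
    have hkey : ∀ k, N ≤ k → ‖A ^ k‖ ≤ r.toReal ^ k := by
      intro k hk
      obtain ⟨h1, h2⟩ := hN k hk
      have hk0 : (k : ℝ) ≠ 0 := by exact_mod_cast (Nat.one_le_iff_ne_zero.mp h2)
      have hklt : ((‖A ^ k‖₊ : ENNReal) ^ (1 / k : ℝ)) ^ (k : ℝ) ≤ r ^ (k : ℝ) :=
        ENNReal.rpow_le_rpow h1.le (by positivity)
      rw [← ENNReal.rpow_mul, one_div, inv_mul_cancel₀ hk0, ENNReal.rpow_one] at hklt
      have hfin : r ^ (k : ℝ) ≠ ⊤ := ENNReal.rpow_ne_top_of_nonneg (by positivity) hrtop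
      have := (ENNReal.toReal_le_toReal ENNReal.coe_ne_top hfin).mpr hklt
      rw [ENNReal.coe_toReal, ← ENNReal.toReal_rpow, Real.rpow_natCast] at this
      exact this
    have hsh : Summable (fun k => ‖A ^ (k + N)‖) := by
      refine Summable.of_nonneg_of_le (fun k => norm_nonneg _)
        (fun k => hkey _ (Nat.le_add_left N k)) ?_
      simp_rw [pow_add]
      exact (summable_geometric_of_lt_one ENNReal.toReal_nonneg hrr).mul_right _
    exact (summable_nat_add_iff N).mp hsh
  refine ⟨fun k => ‖A ^ k‖, fun k => norm_nonneg _, hsum, ?_, ?_⟩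
  · have hbd : ∀ k, ‖A ^ k‖ ≤ ∑' j, ‖A ^ j‖ :=
      fun k => Summable.le_tsum hsum k fun _ _ => norm_nonneg _
    refine Summable.of_nonneg_of_le (fun k => by positivity) (fun k => ?_)
      (hsum.mul_left (∑' j, ‖A ^ j‖))
    have h1 := hbd k
    have h2 : (0:ℝ) ≤ ‖A ^ k‖ := norm_nonneg _
    nlinarith
  · intro k i
    have h : (∑ j, ‖(A ^ k) i j‖₊) ≤ ‖A ^ k‖₊ := by
      rw [Matrix.linfty_opNNNorm_def]
      exact Finset.le_sup (f := fun i => ∑ j, ‖(A ^ k) i j‖₊) (Finset.mem_univ i)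
    have := NNReal.coe_le_coe.mpr h
    simpa [NNReal.coe_sum] using this

end Aux

lemma summable_mul_star {a b : ℕ → ℂ} (ha : Summable fun k => ‖a k‖ ^ 2)
    (hb : Summable fun k => ‖b k‖ ^ 2) : Summable fun k => a k * star (b k) := by
  refine Summable.of_norm ?_
  refine Summable.of_nonneg_of_le (fun k => norm_nonneg _) (fun k => ?_)
    ((ha.add hb).div_const 2)
  rw [norm_mul, norm_star]
  nlinarith [sq_nonneg (‖a k‖ - ‖b k‖), norm_nonneg (a k), norm_nonneg (b k)]

/-- A crude Frobenius-norm bound from a uniform entrywise bound. -/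
lemma frob_le_card_mul {ι κ : Type*} [Fintype ι] [Fintype κ] (M : Matrix ι κ ℂ) (B : ℝ)
    (hB : 0 ≤ B) (h : ∀ i j, ‖M i j‖ ≤ B) :
    frob M ≤ (Fintype.card ι : ℝ) * (Fintype.card κ : ℝ) * B := by
  unfold frob
  have hc : ((Fintype.card ι * Fintype.card κ : ℕ) : ℝ)
      ≤ ((Fintype.card ι * Fintype.card κ : ℕ) : ℝ) ^ 2 := by
    exact_mod_cast Nat.le_self_pow two_ne_zero _
  have h1 : (∑ i, ∑ j, ‖M i j‖ ^ 2) ≤ ((Fintype.card ι * Fintype.card κ : ℕ) : ℝ) * B ^ 2 := by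
    calc (∑ i, ∑ j, ‖M i j‖ ^ 2) ≤ ∑ _i : ι, ∑ _j : κ, B ^ 2 :=
          Finset.sum_le_sum fun i _ => Finset.sum_le_sum fun j _ =>
            pow_le_pow_left₀ (norm_nonneg _) (h i j) 2
      _ = ((Fintype.card ι * Fintype.card κ : ℕ) : ℝ) * B ^ 2 := by
          simp [Finset.sum_const, Finset.card_univ, nsmul_eq_mul]
          ring
  calc Real.sqrt (∑ i, ∑ j, ‖M i j‖ ^ 2)
      ≤ Real.sqrt (((Fintype.card ι * Fintype.card κ : ℕ) : ℝ) * B ^ 2) :=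
        Real.sqrt_le_sqrt h1
    _ ≤ Real.sqrt ((((Fintype.card ι * Fintype.card κ : ℕ) : ℝ) * B) ^ 2) := by
        apply Real.sqrt_le_sqrt
        have hB2 : (0:ℝ) ≤ B ^ 2 := sq_nonneg _
        nlinarith [Nat.cast_nonneg (α := ℝ) (Fintype.card ι * Fintype.card κ)]
    _ = ((Fintype.card ι * Fintype.card κ : ℕ) : ℝ) * B := by
        rw [Real.sqrt_sq (mul_nonneg (Nat.cast_nonneg _) hB)]
    _ = (Fintype.card ι : ℝ) * (Fintype.card κ : ℝ) * B := by push_cast; ring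

/-- Entrywise bound for the gramian difference, with abstract bounds. -/
lemma gram_diff_entry_bound {n m : ℕ} (c : ℕ → ℝ) (hc0 : ∀ k, 0 ≤ c k)
    (hc1 : Summable c) (hc2 : Summable fun k => c k ^ 2)
    (x : ℕ → Fin n → ℂ) (w : ℕ → Fin m → ℂ) (y : ℕ → Fin n → ℂ)
    (X W Y : ℝ) (hX0 : 0 ≤ X) (hW0 : 0 ≤ W) (hY0 : 0 ≤ Y)
    (hxbd : ∀ k i, ‖x k i‖ ≤ X) (hwbd : ∀ k i, ‖w k i‖ ≤ W)
    (hybd : ∀ k i, ‖y k i‖ ≤ c k * Y)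
    (hx : Summable fun k => ∑ i, ‖x k i‖ ^ 2) (hw : Summable fun k => ∑ i, ‖w k i‖ ^ 2)
    (i j : Fin n ⊕ Fin m) :
    ‖(gram (fun k => x k + y k) w - gram x w) i j‖ ≤
      2 * ((X + W) * Y) * (∑' k, c k) + Y ^ 2 * (∑' k, c k ^ 2) := by
  classical
  set u : ℕ → (Fin n ⊕ Fin m) → ℂ := fun k => Sum.elim (x k) (w k) with hu
  set v : ℕ → (Fin n ⊕ Fin m) → ℂ := fun k => Sum.elim (y k) 0 with hv
  have helim : ∀ k, Sum.elim (x k + y k) (w k) = u k + v k := by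
    intro k; funext i; cases i <;> simp [hu, hv]
  have hubd : ∀ k i, ‖u k i‖ ≤ X + W := by
    intro k i
    cases i with
    | inl a => exact le_add_of_le_of_nonneg (by simpa [hu] using hxbd k a) hW0
    | inr b => exact le_add_of_nonneg_of_le hX0 (by simpa [hu] using hwbd k b)
  have hvbd : ∀ k i, ‖v k i‖ ≤ c k * Y := by
    intro k i
    cases i with
    | inl a => simpa [hv] using hybd k a
    | inr b => simpa [hv] using mul_nonneg (hc0 k) hY0
  have hu2 : ∀ i, Summable fun k => ‖u k i‖ ^ 2 := by
    intro i
    cases i with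
    | inl a =>
      refine Summable.of_nonneg_of_le (fun k => by positivity) (fun k => ?_) hx
      simpa [hu] using Finset.single_le_sum (f := fun i => ‖x k i‖ ^ 2)
        (fun i _ => by positivity) (Finset.mem_univ a)
    | inr b =>
      refine Summable.of_nonneg_of_le (fun k => by positivity) (fun k => ?_) hw
      simpa [hu] using Finset.single_le_sum (f := fun i => ‖w k i‖ ^ 2)
        (fun i _ => by positivity) (Finset.mem_univ b)
  have hv2 : ∀ i, Summable fun k => ‖v k i‖ ^ 2 := by
    intro i
    refine Summable.of_nonneg_of_le (fun k => by positivity) (fun k => ?_)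
      (hc2.mul_right (Y ^ 2))
    have h1 := hvbd k i
    have h0 : (0:ℝ) ≤ ‖v k i‖ := norm_nonneg _
    nlinarith [mul_nonneg (hc0 k) hY0]
  have huv2 : ∀ i, Summable fun k => ‖(u k + v k) i‖ ^ 2 := by
    intro i
    refine Summable.of_nonneg_of_le (fun k => by positivity) (fun k => ?_)
      (((hu2 i).mul_left 2).add ((hv2 i).mul_left 2))
    have h1 : ‖(u k + v k) i‖ ≤ ‖u k i‖ + ‖v k i‖ := norm_add_le _ _
    have h2 : (0:ℝ) ≤ ‖u k i‖ := norm_nonneg _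
    have h3 : (0:ℝ) ≤ ‖v k i‖ := norm_nonneg _
    have h4 : ‖(u k + v k) i‖ ^ 2 ≤ (‖u k i‖ + ‖v k i‖) ^ 2 :=
      pow_le_pow_left₀ (norm_nonneg _) h1 2
    nlinarith [sq_nonneg (‖u k i‖ - ‖v k i‖)]
  have hsU : Summable fun k => outer (u k) :=
    Pi.summable.mpr fun i => Pi.summable.mpr fun j => summable_mul_star (hu2 i) (hu2 j)
  have hsUV : Summable fun k => outer (u k + v k) :=
    Pi.summable.mpr fun i => Pi.summable.mpr fun j => summable_mul_star (huv2 i) (huv2 j)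
  have hgU : gram x w i j = ∑' k, u k i * star (u k j) := by
    calc gram x w i j = (∑' k, outer (u k)) i j := rfl
      _ = (∑' k, outer (u k) i) j := by exact congrFun (tsum_apply hsU) j
      _ = ∑' k, outer (u k) i j := by rw [tsum_apply (Pi.summable.mp hsU i)]
      _ = ∑' k, u k i * star (u k j) := rfl
  have hgUV : gram (fun k => x k + y k) w i j = ∑' k, (u k + v k) i * star ((u k + v k) j) := by
    have hg : gram (fun k => x k + y k) w = ∑' k, outer (u k + v k) := by
      unfold _root_.gram; congr 1; funext k; rw [helim k]
    calc gram (fun k => x k + y k) w i j = (∑' k, outer (u k + v k)) i j := by rw [hg]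
      _ = (∑' k, outer (u k + v k) i) j := by exact congrFun (tsum_apply hsUV) j
      _ = ∑' k, outer (u k + v k) i j := by rw [tsum_apply (Pi.summable.mp hsUV i)]
      _ = _ := rfl
  have hterm : ∀ k,
      ‖(u k + v k) i * star ((u k + v k) j) - u k i * star (u k j)‖ ≤
        2 * ((X + W) * Y) * c k + Y ^ 2 * c k ^ 2 := by
    intro k
    have hid : (u k + v k) i * star ((u k + v k) j) - u k i * star (u k j)
        = u k i * star (v k j) + v k i * star (u k j) + v k i * star (v k j) := by
      simp only [Pi.add_apply, star_add]
      ring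
    rw [hid]
    have hckY : (0:ℝ) ≤ c k * Y := mul_nonneg (hc0 k) hY0
    have hXW : (0:ℝ) ≤ X + W := by linarith
    calc ‖u k i * star (v k j) + v k i * star (u k j) + v k i * star (v k j)‖
        ≤ ‖u k i * star (v k j)‖ + ‖v k i * star (u k j)‖ + ‖v k i * star (v k j)‖ :=
          norm_add₃_le
      _ ≤ (X + W) * (c k * Y) + (c k * Y) * (X + W) + (c k * Y) * (c k * Y) := by
          gcongr
          · rw [norm_mul, norm_star]
            exact mul_le_mul (hubd k i) (hvbd k j) (norm_nonneg _) hXW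
          · rw [norm_mul, norm_star]
            exact mul_le_mul (hvbd k i) (hubd k j) (norm_nonneg _) hckY
          · rw [norm_mul, norm_star]
            exact mul_le_mul (hvbd k i) (hvbd k j) (norm_nonneg _) hckY
      _ = 2 * ((X + W) * Y) * c k + Y ^ 2 * c k ^ 2 := by ring
  have hgsum : Summable (fun k => 2 * ((X + W) * Y) * c k + Y ^ 2 * c k ^ 2) :=
    (hc1.mul_left _).add (hc2.mul_left _)
  have hM : (gram (fun k => x k + y k) w - gram x w) i j
      = ∑' k, ((u k + v k) i * star ((u k + v k) j) - u k i * star (u k j)) := by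
    rw [Matrix.sub_apply, hgUV, hgU,
      ← Summable.tsum_sub (summable_mul_star (huv2 i) (huv2 j)) (summable_mul_star (hu2 i) (hu2 j))]
  rw [hM]
  have hsn : Summable fun k =>
      ‖(u k + v k) i * star ((u k + v k) j) - u k i * star (u k j)‖ :=
    Summable.of_nonneg_of_le (fun k => norm_nonneg _) hterm hgsum
  calc ‖∑' k, ((u k + v k) i * star ((u k + v k) j) - u k i * star (u k j))‖
      ≤ ∑' k, ‖(u k + v k) i * star ((u k + v k) j) - u k i * star (u k j)‖ :=
        norm_tsum_le_tsum_norm hsn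
    _ ≤ ∑' k, (2 * ((X + W) * Y) * c k + Y ^ 2 * c k ^ 2) := Summable.tsum_le_tsum hterm hsn hgsum
    _ = 2 * ((X + W) * Y) * (∑' k, c k) + Y ^ 2 * (∑' k, c k ^ 2) := by
        rw [Summable.tsum_add (hc1.mul_left _) (hc2.mul_left _), tsum_mul_left, tsum_mul_left]

theorem gramian_perturbation_bound {n m : ℕ}
    (A : Matrix (Fin n) (Fin n) ℂ) (hA : spectralRadius ℂ A < 1) :
    ∃ C : ℝ, ∀ (x : ℕ → Fin n → ℂ) (w : ℕ → Fin m → ℂ) (y : ℕ → Fin n → ℂ),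
      Summable (fun k => ∑ i, ‖x k i‖ ^ 2) →
      Summable (fun k => ∑ i, ‖w k i‖ ^ 2) →
      (∀ k, y k = (A ^ k).mulVec (y 0)) →
      frob (gram (fun k => x k + y k) w - gram x w) ≤
        C * max
          (((⨆ k, Real.sqrt (∑ i, ‖x k i‖ ^ 2)) + ⨆ k, Real.sqrt (∑ i, ‖w k i‖ ^ 2)) *
            Real.sqrt (∑ i, ‖y 0 i‖ ^ 2))
          (∑ i, ‖y 0 i‖ ^ 2) := by
  classical
  obtain ⟨c, hc0, hc1, hc2, hcrow⟩ := exists_geom_bound A hA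
  have hS₁0 : 0 ≤ ∑' k, c k := tsum_nonneg hc0
  have hS₂0 : 0 ≤ ∑' k, c k ^ 2 := tsum_nonneg fun k => sq_nonneg _
  refine ⟨((n + m) * (n + m)) * (2 * (∑' k, c k) + (∑' k, c k ^ 2)), ?_⟩
  intro x w y hx hw hy
  -- bounds for the sups
  have hbddx : BddAbove (Set.range fun k => Real.sqrt (∑ i, ‖x k i‖ ^ 2)) := by
    refine ⟨Real.sqrt (∑' k, ∑ i, ‖x k i‖ ^ 2), ?_⟩
    rintro _ ⟨k, rfl⟩
    exact Real.sqrt_le_sqrt (Summable.le_tsum hx k fun j _ =>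
      Finset.sum_nonneg fun i _ => sq_nonneg _)
  have hbddw : BddAbove (Set.range fun k => Real.sqrt (∑ i, ‖w k i‖ ^ 2)) := by
    refine ⟨Real.sqrt (∑' k, ∑ i, ‖w k i‖ ^ 2), ?_⟩
    rintro _ ⟨k, rfl⟩
    exact Real.sqrt_le_sqrt (Summable.le_tsum hw k fun j _ =>
      Finset.sum_nonneg fun i _ => sq_nonneg _)
  have hX0 : 0 ≤ ⨆ k, Real.sqrt (∑ i, ‖x k i‖ ^ 2) :=
    le_trans (Real.sqrt_nonneg _) (le_ciSup hbddx 0)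
  have hW0 : 0 ≤ ⨆ k, Real.sqrt (∑ i, ‖w k i‖ ^ 2) :=
    le_trans (Real.sqrt_nonneg _) (le_ciSup hbddw 0)
  have hY0 : 0 ≤ Real.sqrt (∑ i, ‖y 0 i‖ ^ 2) := Real.sqrt_nonneg _
  have hY2 : Real.sqrt (∑ i, ‖y 0 i‖ ^ 2) ^ 2 = ∑ i, ‖y 0 i‖ ^ 2 :=
    Real.sq_sqrt (Finset.sum_nonneg fun i _ => sq_nonneg _)
  have hxbd : ∀ k i, ‖x k i‖ ≤ ⨆ k, Real.sqrt (∑ i, ‖x k i‖ ^ 2) := by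
    intro k i
    have h1 : ‖x k i‖ ≤ Real.sqrt (∑ i, ‖x k i‖ ^ 2) := by
      rw [show ‖x k i‖ = Real.sqrt (‖x k i‖ ^ 2) from (Real.sqrt_sq (norm_nonneg _)).symm]
      exact Real.sqrt_le_sqrt (Finset.single_le_sum (f := fun i => ‖x k i‖ ^ 2)
        (fun i _ => sq_nonneg _) (Finset.mem_univ i))
    exact h1.trans (le_ciSup hbddx k)
  have hwbd : ∀ k i, ‖w k i‖ ≤ ⨆ k, Real.sqrt (∑ i, ‖w k i‖ ^ 2) := by
    intro k i
    have h1 : ‖w k i‖ ≤ Real.sqrt (∑ i, ‖w k i‖ ^ 2) := by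
      rw [show ‖w k i‖ = Real.sqrt (‖w k i‖ ^ 2) from (Real.sqrt_sq (norm_nonneg _)).symm]
      exact Real.sqrt_le_sqrt (Finset.single_le_sum (f := fun i => ‖w k i‖ ^ 2)
        (fun i _ => sq_nonneg _) (Finset.mem_univ i))
    exact h1.trans (le_ciSup hbddw k)
  have hy0bd : ∀ j, ‖y 0 j‖ ≤ Real.sqrt (∑ i, ‖y 0 i‖ ^ 2) := by
    intro j
    rw [show ‖y 0 j‖ = Real.sqrt (‖y 0 j‖ ^ 2) from (Real.sqrt_sq (norm_nonneg _)).symm]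
    exact Real.sqrt_le_sqrt (Finset.single_le_sum (f := fun i => ‖y 0 i‖ ^ 2)
      (fun i _ => sq_nonneg _) (Finset.mem_univ j))
  have hybd : ∀ k i, ‖y k i‖ ≤ c k * Real.sqrt (∑ i, ‖y 0 i‖ ^ 2) := by
    intro k i
    rw [hy k]
    calc ‖(A ^ k).mulVec (y 0) i‖ = ‖∑ j, (A ^ k) i j * y 0 j‖ := rfl
      _ ≤ ∑ j, ‖(A ^ k) i j * y 0 j‖ := norm_sum_le _ _
      _ ≤ ∑ j, ‖(A ^ k) i j‖ * Real.sqrt (∑ i, ‖y 0 i‖ ^ 2) := by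
          refine Finset.sum_le_sum fun j _ => ?_
          rw [norm_mul]
          exact mul_le_mul_of_nonneg_left (hy0bd j) (norm_nonneg _)
      _ = (∑ j, ‖(A ^ k) i j‖) * Real.sqrt (∑ i, ‖y 0 i‖ ^ 2) := by rw [Finset.sum_mul]
      _ ≤ c k * Real.sqrt (∑ i, ‖y 0 i‖ ^ 2) :=
          mul_le_mul_of_nonneg_right (hcrow k i) hY0
  have hentry := gram_diff_entry_bound c hc0 hc1 hc2 x w y _ _ _ hX0 hW0 hY0 hxbd hwbd hybd hx hw
  -- abbreviation for the entry bound
  have hXWY0 : 0 ≤ ((⨆ k, Real.sqrt (∑ i, ‖x k i‖ ^ 2)) +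
      ⨆ k, Real.sqrt (∑ i, ‖w k i‖ ^ 2)) * Real.sqrt (∑ i, ‖y 0 i‖ ^ 2) :=
    mul_nonneg (add_nonneg hX0 hW0) hY0
  have hnm0 : (0:ℝ) ≤ (n + m : ℝ) := by positivity
  have hB0 : 0 ≤ 2 * (((⨆ k, Real.sqrt (∑ i, ‖x k i‖ ^ 2)) +
        ⨆ k, Real.sqrt (∑ i, ‖w k i‖ ^ 2)) * Real.sqrt (∑ i, ‖y 0 i‖ ^ 2)) * (∑' k, c k) +
      Real.sqrt (∑ i, ‖y 0 i‖ ^ 2) ^ 2 * (∑' k, c k ^ 2) :=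
    add_nonneg (mul_nonneg (mul_nonneg (by norm_num) hXWY0) hS₁0)
      (mul_nonneg (sq_nonneg _) hS₂0)
  -- Frobenius norm bound
  have hfrob := frob_le_card_mul (gram (fun k => x k + y k) w - gram x w) _ hB0 hentry
  have hcard : (Fintype.card (Fin n ⊕ Fin m) : ℝ) = (n : ℝ) + (m : ℝ) := by simp
  rw [hcard] at hfrob
  refine hfrob.trans ?_
  have h1 : ((⨆ k, Real.sqrt (∑ i, ‖x k i‖ ^ 2)) + ⨆ k, Real.sqrt (∑ i, ‖w k i‖ ^ 2)) *
      Real.sqrt (∑ i, ‖y 0 i‖ ^ 2) ≤ max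
        (((⨆ k, Real.sqrt (∑ i, ‖x k i‖ ^ 2)) + ⨆ k, Real.sqrt (∑ i, ‖w k i‖ ^ 2)) *
          Real.sqrt (∑ i, ‖y 0 i‖ ^ 2)) (∑ i, ‖y 0 i‖ ^ 2) := le_max_left _ _
  have h2 : Real.sqrt (∑ i, ‖y 0 i‖ ^ 2) ^ 2 ≤ max
        (((⨆ k, Real.sqrt (∑ i, ‖x k i‖ ^ 2)) + ⨆ k, Real.sqrt (∑ i, ‖w k i‖ ^ 2)) *
          Real.sqrt (∑ i, ‖y 0 i‖ ^ 2)) (∑ i, ‖y 0 i‖ ^ 2) := by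
    rw [hY2]; exact le_max_right _ _
  have hmx0 : 0 ≤ max
        (((⨆ k, Real.sqrt (∑ i, ‖x k i‖ ^ 2)) + ⨆ k, Real.sqrt (∑ i, ‖w k i‖ ^ 2)) *
          Real.sqrt (∑ i, ‖y 0 i‖ ^ 2)) (∑ i, ‖y 0 i‖ ^ 2) :=
    le_trans hXWY0 h1
  have hBle : 2 * (((⨆ k, Real.sqrt (∑ i, ‖x k i‖ ^ 2)) +
        ⨆ k, Real.sqrt (∑ i, ‖w k i‖ ^ 2)) * Real.sqrt (∑ i, ‖y 0 i‖ ^ 2)) * (∑' k, c k) +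
      Real.sqrt (∑ i, ‖y 0 i‖ ^ 2) ^ 2 * (∑' k, c k ^ 2) ≤
      (2 * (∑' k, c k) + (∑' k, c k ^ 2)) * max
        (((⨆ k, Real.sqrt (∑ i, ‖x k i‖ ^ 2)) + ⨆ k, Real.sqrt (∑ i, ‖w k i‖ ^ 2)) *
          Real.sqrt (∑ i, ‖y 0 i‖ ^ 2)) (∑ i, ‖y 0 i‖ ^ 2) := by
    nlinarith [mul_le_mul_of_nonneg_left h1 hS₁0, mul_le_mul_of_nonneg_left h2 hS₂0]
  calc ((n : ℝ) + (m : ℝ)) * ((n : ℝ) + (m : ℝ)) *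
        (2 * (((⨆ k, Real.sqrt (∑ i, ‖x k i‖ ^ 2)) +
          ⨆ k, Real.sqrt (∑ i, ‖w k i‖ ^ 2)) * Real.sqrt (∑ i, ‖y 0 i‖ ^ 2)) * (∑' k, c k) +
        Real.sqrt (∑ i, ‖y 0 i‖ ^ 2) ^ 2 * (∑' k, c k ^ 2))
      ≤ ((n : ℝ) + (m : ℝ)) * ((n : ℝ) + (m : ℝ)) *
        ((2 * (∑' k, c k) + (∑' k, c k ^ 2)) * max
          (((⨆ k, Real.sqrt (∑ i, ‖x k i‖ ^ 2)) + ⨆ k, Real.sqrt (∑ i, ‖w k i‖ ^ 2)) *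
            Real.sqrt (∑ i, ‖y 0 i‖ ^ 2)) (∑ i, ‖y 0 i‖ ^ 2)) :=
        mul_le_mul_of_nonneg_left hBle (mul_nonneg hnm0 hnm0)
    _ = (↑n + ↑m) * (↑n + ↑m) * (2 * (∑' k, c k) + (∑' k, c k ^ 2)) * max
          (((⨆ k, Real.sqrt (∑ i, ‖x k i‖ ^ 2)) + ⨆ k, Real.sqrt (∑ i, ‖w k i‖ ^ 2)) *
            Real.sqrt (∑ i, ‖y 0 i‖ ^ 2)) (∑ i, ‖y 0 i‖ ^ 2) := by ring
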